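/- Let Φ ∈ ℝ^{N×P} with P ≤ N and ΦᵀΦ ∈ ℝ^{P×P} invertible (underparameterized model), let D ∈ ℝ^{P×P} be symmetric positive definite, Ŷ ∈ ℝ^N, and θ₀ ∈ ℝ^P arbitrary. Consider the adaptive gradient iteration θ_{t+1} = θ_t − (η/N) D Φᵀ(Φθ_t − Ŷ). Then there exists η₀ > 0 such that for all 0 < η < η₀ the iterates converge to θ∞ = (ΦᵀΦ)⁻¹ Φᵀ Ŷ, the unique least-squares minimizer; in particular the limit is independent of both the initialization θ₀ and the adaptive matrix D (and D = I recovers plain gradient descent). -/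

import Mathlib

open Matrix Filter

/-- Comparison of two continuous 2-homogeneous functions, the denominator positive definite. -/
private lemma exists_quad_ratio {n : ℕ} (f g : (Fin n → ℝ) → ℝ)
    (hf : Continuous f) (hg : Continuous g)
    (hfh : ∀ (c : ℝ) x, f (c • x) = c ^ 2 * f x)
    (hgh : ∀ (c : ℝ) x, g (c • x) = c ^ 2 * g x)
    (hgpos : ∀ x, x ≠ 0 → 0 < g x) :
    ∃ C > 0, ∀ x, f x ≤ C * g x := by
  have hf0 : f 0 = 0 := by have := hfh 0 0; simpa using this
  have hg0 : g 0 = 0 := by have := hgh 0 0; simpa using this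
  rcases subsingleton_or_nontrivial (Fin n → ℝ) with hs | hs
  · exact ⟨1, one_pos, fun x => by rw [Subsingleton.elim x 0, hf0, hg0]; norm_num⟩
  have hcomp : IsCompact (Metric.sphere (0 : Fin n → ℝ) 1) := isCompact_sphere 0 1
  have hne : (Metric.sphere (0 : Fin n → ℝ) 1).Nonempty :=
    NormedSpace.sphere_nonempty.2 zero_le_one
  have hcont : ContinuousOn (fun x => f x / g x) (Metric.sphere (0 : Fin n → ℝ) 1) := by
    refine hf.continuousOn.div hg.continuousOn fun x hx => ?_
    have hx0 : x ≠ 0 := by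
      intro h
      rw [h] at hx
      simp at hx
    exact (hgpos x hx0).ne'
  obtain ⟨z, hz, hmax⟩ := hcomp.exists_isMaxOn hne hcont
  refine ⟨max (f z / g z) 1, lt_of_lt_of_le one_pos (le_max_right _ _), fun x => ?_⟩
  rcases eq_or_ne x 0 with rfl | hx0
  · rw [hf0, hg0]; simp
  have hxn : ‖x‖ ≠ 0 := norm_ne_zero_iff.2 hx0
  set u : Fin n → ℝ := ‖x‖⁻¹ • x with hu
  have hus : u ∈ Metric.sphere (0 : Fin n → ℝ) 1 := by
    simp only [mem_sphere_iff_norm, sub_zero, hu, norm_smul, norm_inv, norm_norm]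
    exact inv_mul_cancel₀ hxn
  have hu0 : u ≠ 0 := by
    intro h
    rw [h] at hus
    simp at hus
  have hgu := hgpos u hu0
  have hineq : f u ≤ max (f z / g z) 1 * g u := by
    have h1 : f u / g u ≤ f z / g z := hmax hus
    have h2 : f u ≤ (f z / g z) * g u := by
      rw [← div_le_iff₀ hgu] at *
      exact h1
    calc f u ≤ (f z / g z) * g u := h2
      _ ≤ max (f z / g z) 1 * g u := mul_le_mul_of_nonneg_right (le_max_left _ _) hgu.le
  have hx : ‖x‖ • u = x := by rw [hu, smul_smul, mul_inv_cancel₀ hxn, one_smul]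
  have hfx : f x = ‖x‖ ^ 2 * f u := by rw [← hx, hfh, hx]
  have hgx : g x = ‖x‖ ^ 2 * g u := by rw [← hx, hgh, hx]
  rw [hfx, hgx]
  calc ‖x‖ ^ 2 * f u ≤ ‖x‖ ^ 2 * (max (f z / g z) 1 * g u) :=
        mul_le_mul_of_nonneg_left hineq (sq_nonneg _)
    _ = max (f z / g z) 1 * (‖x‖ ^ 2 * g u) := by ring

/-- **Underparameterized models have a unique, method-independent minimizer.**
If `P ≤ N`, `ΦᵀΦ` is invertible and `D` is symmetric positive definite, then for all
sufficiently small `η > 0` the adaptive iterates `θ_{t+1} = θ_t − (η/N) D Φᵀ(Φθ_t − Yhat)`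
converge to the unique least-squares minimizer `θ∞ = (ΦᵀΦ)⁻¹ΦᵀYhat`, independently of the
initialization `θ₀` and of the adaptive matrix `D`. -/
theorem underparam_unique_minimizer {N P : ℕ} (hPN : P ≤ N) (hN : 0 < N)
    (Φ : Matrix (Fin N) (Fin P) ℝ) (hinv : IsUnit (Φᵀ * Φ).det)
    (D : Matrix (Fin P) (Fin P) ℝ) (hD : D.PosDef)
    (Yhat : Fin N → ℝ) (θ₀ : Fin P → ℝ) :
    ∃ η₀ > 0, ∀ η : ℝ, 0 < η → η < η₀ →
      ∀ θ : ℕ → Fin P → ℝ, θ 0 = θ₀ →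
        (∀ t, θ (t + 1) = θ t - (η / N) • (D * Φᵀ).mulVec (Φ.mulVec (θ t) - Yhat)) →
        Tendsto θ atTop (nhds (((Φᵀ * Φ)⁻¹ * Φᵀ).mulVec Yhat)) := by
  classical
  set A : Matrix (Fin P) (Fin P) ℝ := Φᵀ * Φ with hA
  -- A is positive definite
  have hAunit : IsUnit A := (Matrix.isUnit_iff_isUnit_det A).2 hinv
  have hΦinj : ∀ x : Fin P → ℝ, Φ *ᵥ x = 0 → x = 0 := by
    intro x hx
    have h1 : A *ᵥ x = 0 := by
      rw [hA, ← Matrix.mulVec_mulVec, hx, Matrix.mulVec_zero]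
    have h2 := Matrix.mulVec_injective_iff_isUnit.2 hAunit
    have : A *ᵥ x = A *ᵥ 0 := by rw [h1, Matrix.mulVec_zero]
    exact h2 this
  have hsymm : ∀ (M : Matrix (Fin P) (Fin P) ℝ), Mᵀ = M →
      ∀ u v : Fin P → ℝ, (M *ᵥ u) ⬝ᵥ v = u ⬝ᵥ (M *ᵥ v) := by
    intro M hM u v
    rw [Matrix.dotProduct_mulVec, ← Matrix.vecMul_transpose, hM, dotProduct_comm]
  have hAsymm : Aᵀ = A := by
    rw [hA, Matrix.transpose_mul, Matrix.transpose_transpose]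
  have hDsymm : Dᵀ = D := by
    have := hD.1
    rwa [Matrix.IsHermitian, Matrix.conjTranspose_eq_transpose_of_trivial] at this
  have hAPD : A.PosDef := by
    refine Matrix.PosDef.of_dotProduct_mulVec_pos ?_ ?_
    · rw [Matrix.IsHermitian, Matrix.conjTranspose_eq_transpose_of_trivial]
      exact hAsymm
    · intro x hx
      have hstar : star x = x := rfl
      rw [hstar, hA, ← Matrix.mulVec_mulVec, Matrix.dotProduct_mulVec, Matrix.vecMul_transpose]
      have hΦx : Φ *ᵥ x ≠ 0 := fun h => hx (hΦinj x h)
      have hnn : (0:ℝ) ≤ (Φ *ᵥ x) ⬝ᵥ (Φ *ᵥ x) :=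
        Finset.sum_nonneg fun i _ => mul_self_nonneg _
      rcases hnn.lt_or_eq with h | h
      · exact h
      · exact absurd (dotProduct_self_eq_zero.1 h.symm) hΦx
  have hDdet : IsUnit D.det := hD.det_pos.ne'.isUnit
  have hDinv : D⁻¹.PosDef := hD.inv
  have hDinvsymm : D⁻¹ᵀ = D⁻¹ := by
    have := hDinv.1
    rwa [Matrix.IsHermitian, Matrix.conjTranspose_eq_transpose_of_trivial] at this
  -- quadratic forms
  set f : (Fin P → ℝ) → ℝ := fun x => x ⬝ᵥ (D⁻¹ *ᵥ x) with hfdef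
  set qA : (Fin P → ℝ) → ℝ := fun x => x ⬝ᵥ (A *ᵥ x) with hqAdef
  set qB : (Fin P → ℝ) → ℝ := fun x => (A *ᵥ x) ⬝ᵥ (D *ᵥ (A *ᵥ x)) with hqBdef
  have hfpos : ∀ x, x ≠ 0 → 0 < f x := fun x hx => hDinv.dotProduct_mulVec_pos hx
  have hqApos : ∀ x, x ≠ 0 → 0 < qA x := fun x hx => hAPD.dotProduct_mulVec_pos hx
  have hfnonneg : ∀ x, 0 ≤ f x := by
    intro x
    rcases eq_or_ne x 0 with rfl | hx
    · simp [hfdef]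
    · exact (hfpos x hx).le
  have hfcont : Continuous f := continuous_id.dotProduct
    (continuous_const.matrix_mulVec continuous_id)
  have hqAcont : Continuous qA := continuous_id.dotProduct
    (continuous_const.matrix_mulVec continuous_id)
  have hqBcont : Continuous qB :=
    (continuous_const.matrix_mulVec continuous_id).dotProduct
      (continuous_const.matrix_mulVec (continuous_const.matrix_mulVec continuous_id))
  have hfh : ∀ (c : ℝ) x, f (c • x) = c ^ 2 * f x := by
    intro c x
    simp only [hfdef, Matrix.mulVec_smul, smul_dotProduct, dotProduct_smul,
      smul_eq_mul]
    ring
  have hqAh : ∀ (c : ℝ) x, qA (c • x) = c ^ 2 * qA x := by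
    intro c x
    simp only [hqAdef, Matrix.mulVec_smul, smul_dotProduct, dotProduct_smul,
      smul_eq_mul]
    ring
  have hqBh : ∀ (c : ℝ) x, qB (c • x) = c ^ 2 * qB x := by
    intro c x
    simp only [hqBdef, Matrix.mulVec_smul, smul_dotProduct, dotProduct_smul,
      smul_eq_mul]
    ring
  have hnh : ∀ (c : ℝ) (x : Fin P → ℝ), ‖c • x‖ ^ 2 = c ^ 2 * ‖x‖ ^ 2 := by
    intro c x
    rw [norm_smul]
    simp [mul_pow, Real.norm_eq_abs, sq_abs]
  obtain ⟨C₂, hC₂pos, hC₂⟩ := exists_quad_ratio f qA hfcont hqAcont hfh hqAh hqApos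
  obtain ⟨C₁, hC₁pos, hC₁⟩ := exists_quad_ratio qB f hqBcont hfcont hqBh hfh hfpos
  obtain ⟨C₃, hC₃pos, hC₃⟩ := exists_quad_ratio (fun x => ‖x‖ ^ 2) f
    (continuous_norm.pow 2) hfcont hnh hfh hfpos
  -- choose η₀
  refine ⟨N * min (1 / (C₁ * C₂)) (C₂ / 2), by positivity, ?_⟩
  intro η hη hηlt θ hθ0 hrec
  set c : ℝ := η / N with hc
  have hNpos : (0:ℝ) < N := by exact_mod_cast hN
  have hcpos : 0 < c := div_pos hη hNpos
  have hclt : c < min (1 / (C₁ * C₂)) (C₂ / 2) := by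
    rw [hc, div_lt_iff₀ hNpos]
    linarith [hηlt]
  have hc1 : c * (C₁ * C₂) < 1 := by
    have := (lt_min_iff.1 hclt).1
    rw [lt_div_iff₀ (by positivity)] at this
    linarith
  have hc2 : 2 * c / C₂ < 1 := by
    have := (lt_min_iff.1 hclt).2
    rw [div_lt_one hC₂pos]
    linarith
  set r : ℝ := 1 - 2 * c / C₂ + c ^ 2 * C₁ with hr
  have hr1 : r < 1 := by
    have h1 : c ^ 2 * C₁ < c / C₂ := by
      have : c * C₁ < 1 / C₂ := by
        rw [lt_div_iff₀ hC₂pos]; nlinarith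
      calc c ^ 2 * C₁ = c * (c * C₁) := by ring
        _ < c * (1 / C₂) := by
          exact mul_lt_mul_of_pos_left this hcpos
        _ = c / C₂ := by ring
    rw [hr]
    have h2 : 0 < c / C₂ := by positivity
    have h3 : 2 * c / C₂ = 2 * (c / C₂) := by ring
    rw [h3]
    linarith
  have hr0 : 0 < r := by
    rw [hr]
    have : 0 ≤ c ^ 2 * C₁ := by positivity
    linarith
  -- the limit point
  set L : Fin P → ℝ := ((Φᵀ * Φ)⁻¹ * Φᵀ) *ᵥ Yhat with hL
  have hfix : Φᵀ *ᵥ (Φ *ᵥ L - Yhat) = 0 := by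
    rw [Matrix.mulVec_sub, hL, Matrix.mulVec_mulVec, Matrix.mulVec_mulVec, ← Matrix.mul_assoc,
      Matrix.mul_nonsing_inv _ hinv, Matrix.one_mul, sub_self]
  -- the error sequence
  set e : ℕ → Fin P → ℝ := fun t => θ t - L with he
  have herec : ∀ t, e (t + 1) = e t - c • (D *ᵥ (A *ᵥ e t)) := by
    intro t
    have h1 : Φ *ᵥ θ t - Yhat = Φ *ᵥ e t + (Φ *ᵥ L - Yhat) := by
      rw [he]
      simp only [Matrix.mulVec_sub]
      abel
    have h2 : (D * Φᵀ) *ᵥ (Φ *ᵥ θ t - Yhat) = D *ᵥ (A *ᵥ e t) := by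
      rw [h1, Matrix.mulVec_add, ← Matrix.mulVec_mulVec (Φ *ᵥ L - Yhat) D Φᵀ, hfix,
        Matrix.mulVec_zero, add_zero, ← Matrix.mulVec_mulVec (Φ *ᵥ e t) D Φᵀ,
        Matrix.mulVec_mulVec (e t) Φᵀ Φ, hA]
    rw [he]
    simp only
    rw [hrec t, h2]
    abel
  -- contraction of f along the iteration
  have hcontract : ∀ x : Fin P → ℝ, f (x - c • (D *ᵥ (A *ᵥ x))) ≤ r * f x := by
    intro x
    set y : Fin P → ℝ := D *ᵥ (A *ᵥ x) with hy
    have hDinvy : D⁻¹ *ᵥ y = A *ᵥ x := by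
      rw [hy, Matrix.mulVec_mulVec, Matrix.mulVec_mulVec, ← Matrix.mul_assoc,
        Matrix.nonsing_inv_mul _ hDdet, Matrix.one_mul]
    have hyDinvx : y ⬝ᵥ (D⁻¹ *ᵥ x) = qA x := by
      rw [hy, hsymm D hDsymm, Matrix.mulVec_mulVec, Matrix.mul_nonsing_inv _ hDdet,
        Matrix.one_mulVec, hqAdef]
      exact dotProduct_comm _ _
    have hyAx : y ⬝ᵥ (A *ᵥ x) = qB x := by
      rw [hy, hqBdef, dotProduct_comm]
    have hexp : f (x - c • y) = f x - 2 * c * qA x + c ^ 2 * qB x := by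
      have e1 : D⁻¹ *ᵥ (x - c • y) = D⁻¹ *ᵥ x - c • (A *ᵥ x) := by
        rw [Matrix.mulVec_sub, Matrix.mulVec_smul, hDinvy]
      have hyD := hyDinvx
      have hyA := hyAx
      simp only [hfdef, hqAdef, hqBdef] at hyD hyA ⊢
      rw [e1]
      simp only [sub_dotProduct, dotProduct_sub, smul_dotProduct,
        dotProduct_smul, smul_eq_mul]
      rw [hyD, hyA]
      ring
    rw [hexp]
    have h1 : f x ≤ C₂ * qA x := hC₂ x
    have h2 : qB x ≤ C₁ * f x := hC₁ x
    have h3 : 0 ≤ f x := hfnonneg x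
    have h4 : f x / C₂ ≤ qA x := by
      rw [div_le_iff₀ hC₂pos]
      calc f x ≤ C₂ * qA x := h1
        _ = qA x * C₂ := by ring
    rw [hr]
    have h5 : 2 * c * (f x / C₂) ≤ 2 * c * qA x :=
      mul_le_mul_of_nonneg_left h4 (by linarith)
    have h6 : c ^ 2 * qB x ≤ c ^ 2 * (C₁ * f x) :=
      mul_le_mul_of_nonneg_left h2 (sq_nonneg _)
    have : 2 * c / C₂ * f x = 2 * c * (f x / C₂) := by ring
    nlinarith [h5, h6]
  -- geometric decay
  have hgeom : ∀ t, f (e t) ≤ r ^ t * f (e 0) := by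
    intro t
    induction t with
    | zero => simp
    | succ t ih =>
      have := hcontract (e t)
      rw [← herec t] at this
      calc f (e (t + 1)) ≤ r * f (e t) := this
        _ ≤ r * (r ^ t * f (e 0)) := mul_le_mul_of_nonneg_left ih hr0.le
        _ = r ^ (t + 1) * f (e 0) := by ring
  -- convergence of the error to zero
  have hnormsq : ∀ t, ‖e t‖ ^ 2 ≤ C₃ * f (e 0) * r ^ t := by
    intro t
    calc ‖e t‖ ^ 2 ≤ C₃ * f (e t) := hC₃ (e t)
      _ ≤ C₃ * (r ^ t * f (e 0)) := mul_le_mul_of_nonneg_left (hgeom t) hC₃pos.le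
      _ = C₃ * f (e 0) * r ^ t := by ring
  have htend_sq : Tendsto (fun t => ‖e t‖ ^ 2) atTop (nhds 0) := by
    have hgeo : Tendsto (fun t : ℕ => C₃ * f (e 0) * r ^ t) atTop (nhds 0) := by
      rw [show (0:ℝ) = C₃ * f (e 0) * 0 by ring]
      exact (tendsto_pow_atTop_nhds_zero_of_lt_one hr0.le hr1).const_mul _
    refine squeeze_zero (fun t => sq_nonneg _) hnormsq hgeo
  have htend_norm : Tendsto (fun t => ‖e t‖) atTop (nhds 0) := by
    have h := htend_sq.sqrt
    rw [Real.sqrt_zero] at h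
    convert h using 2 with t
    rw [Real.sqrt_sq (norm_nonneg _)]
  have htend_e : Tendsto e atTop (nhds 0) :=
    tendsto_zero_iff_norm_tendsto_zero.2 htend_norm
  have hθeq : θ = fun t => e t + L := by
    funext t
    rw [he]
    simp
  rw [hθeq]
  have := htend_e.add_const L
  rwa [zero_add] at this
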